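/- Let L be a finite-dimensional real Lie algebra, s ⊆ L a semisimple Lie subalgebra and I ⊆ L an abelian Lie ideal such that L = s ⊕ I as vector spaces and ⁅L, I⁆ = I. If L admits a symmetric, invariant, non-degenerate bilinear form (L is quasi-classical), then dim I ≤ dim s; equivalently, 2·dim I ≤ dim L. -/

import Mathlib

/-- Let `L` be a finite-dimensional real Lie algebra, `s ⊆ L` a semisimple
Lie subalgebra and `I ⊆ L` an abelian Lie ideal with `L = s ⊕ I` as vector spaces and
`⁅L, I⁆ = I`.  If `L` is quasi-classical (admits a symmetric, invariant, non-degenerate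
bilinear form), then `dim I ≤ dim s`; equivalently `2 * dim I ≤ dim L`. -/
theorem dim_abelian_radical_le_of_quasiClassical
    (L : Type*) [LieRing L] [LieAlgebra ℝ L] [FiniteDimensional ℝ L]
    (s : LieSubalgebra ℝ L) [LieAlgebra.IsSemisimple ℝ s]
    (I : LieIdeal ℝ L) [IsLieAbelian I]
    (hdisj : s.toSubmodule ⊓ (I : LieSubmodule ℝ L L).toSubmodule = ⊥)
    (hspan : s.toSubmodule ⊔ (I : LieSubmodule ℝ L L).toSubmodule = ⊤)
    (hLI : ⁅(⊤ : LieIdeal ℝ L), I⁆ = I)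
    (hqc : ∃ B : L →ₗ[ℝ] L →ₗ[ℝ] ℝ,
      (∀ x y, B x y = B y x) ∧
      (∀ x y z, B ⁅x, y⁆ z = B x ⁅y, z⁆) ∧
      (∀ x, (∀ y, B x y = 0) → x = 0)) :
    Module.finrank ℝ I ≤ Module.finrank ℝ s ∧
      2 * Module.finrank ℝ I ≤ Module.finrank ℝ L := by
  obtain ⟨B, hsym, hinv, hnd⟩ := hqc
  have hndB : LinearMap.BilinForm.Nondegenerate B :=
    ⟨fun x hx => hnd x hx, fun y hy => hnd y (fun x => by rw [hsym]; exact hy x)⟩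
  have hrefl : B.IsRefl := fun x y h => by rw [hsym]; exact h
  set W : Submodule ℝ L := (I : LieSubmodule ℝ L L).toSubmodule with hW
  -- I is isotropic
  have hiso : ∀ x ∈ W, ∀ y ∈ W, B x y = 0 := by
    intro x hx y hy
    have hx' : x ∈ Submodule.span ℝ { m | ∃ a ∈ (⊤ : LieIdeal ℝ L), ∃ n ∈ I, ⁅a, n⁆ = m } := by
      rw [← LieSubmodule.lieIdeal_oper_eq_linear_span', hLI]; exact hx
    clear hx
    induction hx' using Submodule.span_induction with
    | mem m hm =>
        obtain ⟨a, -, n, hn, rfl⟩ := hm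
        have hny : ⁅n, y⁆ = 0 := by
          have := trivial_lie_zero _ _ (⟨n, hn⟩ : I) (⟨y, hy⟩ : I)
          exact congrArg (Subtype.val) this
        rw [hinv, hny, map_zero]
    | zero => simp
    | add a b _ _ ha hb => simp [ha, hb]
    | smul t a _ ha => simp [ha]
  have hle : W ≤ LinearMap.BilinForm.orthogonal B W := by
    intro x hx
    rw [LinearMap.BilinForm.mem_orthogonal_iff]
    intro n hn
    exact hiso n hn x hx
  have h1 : Module.finrank ℝ W ≤ Module.finrank ℝ (LinearMap.BilinForm.orthogonal B W) :=
    Submodule.finrank_mono hle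
  rw [LinearMap.BilinForm.finrank_orthogonal hndB] at h1
  have hsum : Module.finrank ℝ s.toSubmodule + Module.finrank ℝ W = Module.finrank ℝ L := by
    have := Submodule.finrank_sup_add_finrank_inf_eq s.toSubmodule W
    rw [hspan, hdisj, finrank_bot, finrank_top] at this
    omega
  have hWL : Module.finrank ℝ W ≤ Module.finrank ℝ L := Submodule.finrank_le W
  have hI : Module.finrank ℝ I = Module.finrank ℝ W := rfl
  have hs : Module.finrank ℝ s = Module.finrank ℝ s.toSubmodule := rfl
  constructor <;> omega
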